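/- Let ⋆ be a continuous t-norm on [0,1] with residuum →. For every a with 0 < a < 1, the set {(x,y) ∈ [0,1]² : x → y < a} is open, and the set {(x,y) ∈ [0,1]² : x → y > a} is an Fσ set. In particular the residuum is a Borel function. -/

import Mathlib

def unitI : Set ℝ := Set.Icc 0 1

structure IsTNorm (f : ℝ → ℝ → ℝ) : Prop where
  maps : ∀ x ∈ unitI, ∀ y ∈ unitI, f x y ∈ unitI
  comm : ∀ x ∈ unitI, ∀ y ∈ unitI, f x y = f y x
  assoc : ∀ x ∈ unitI, ∀ y ∈ unitI, ∀ z ∈ unitI, f (f x y) z = f x (f y z)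
  one_mul : ∀ x ∈ unitI, f x 1 = x
  mono : ∀ x ∈ unitI, ∀ y ∈ unitI, ∀ z ∈ unitI, x ≤ y → f z x ≤ f z y
  cont : ContinuousOn (fun p : ℝ × ℝ => f p.1 p.2) (unitI ×ˢ unitI)

/-- The residuum of a t-norm: `residuum f y z` is "y → z", i.e. `sup {x ∈ [0,1] : f x y ≤ z}`. -/
noncomputable def residuum (f : ℝ → ℝ → ℝ) (y z : ℝ) : ℝ :=
  sSup {x | x ∈ unitI ∧ f x y ≤ z}

namespace TNormAux

lemma zero_mem : (0:ℝ) ∈ unitI := by simp [unitI]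

lemma one_mem : (1:ℝ) ∈ unitI := by simp [unitI]

variable {f : ℝ → ℝ → ℝ}

lemma mono_left (hf : IsTNorm f) {x y z : ℝ} (hx : x ∈ unitI) (hy : y ∈ unitI)
    (hz : z ∈ unitI) (h : x ≤ y) : f x z ≤ f y z := by
  rw [hf.comm x hx z hz, hf.comm y hy z hz]
  exact hf.mono x hx y hy z hz h

lemma f_zero (hf : IsTNorm f) {y : ℝ} (hy : y ∈ unitI) : f 0 y = 0 := by
  refine le_antisymm ?_ (hf.maps 0 zero_mem y hy).1
  have h1 := hf.mono y hy 1 one_mem 0 zero_mem hy.2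
  rw [hf.one_mul 0 zero_mem] at h1
  exact h1

lemma S_bdd {y z : ℝ} : BddAbove {x | x ∈ unitI ∧ f x y ≤ z} :=
  ⟨1, fun _ hx => hx.1.2⟩

lemma S_nonempty (hf : IsTNorm f) {y z : ℝ} (hy : y ∈ unitI) (hz : 0 ≤ z) :
    ({x | x ∈ unitI ∧ f x y ≤ z} : Set ℝ).Nonempty :=
  ⟨0, zero_mem, by rw [f_zero hf hy]; exact hz⟩

lemma contOn_left (hf : IsTNorm f) {y : ℝ} (hy : y ∈ unitI) :
    ContinuousOn (fun x => f x y) unitI :=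
  hf.cont.comp ((continuous_id.prodMk continuous_const).continuousOn)
    (fun x hx => ⟨hx, hy⟩)

lemma res_mem (hf : IsTNorm f) {y z : ℝ} (hy : y ∈ unitI) (hz : 0 ≤ z) :
    residuum f y z ∈ unitI ∧ f (residuum f y z) y ≤ z := by
  have hcl : IsClosed {x | x ∈ unitI ∧ f x y ≤ z} := by
    have : {x | x ∈ unitI ∧ f x y ≤ z} = unitI ∩ (fun x => f x y) ⁻¹' Set.Iic z := rfl
    rw [this]
    exact (contOn_left hf hy).preimage_isClosed_of_isClosed isClosed_Icc isClosed_Iic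
  exact hcl.csSup_mem (S_nonempty hf hy hz) S_bdd

lemma adj (hf : IsTNorm f) {x y z : ℝ} (hx : x ∈ unitI) (hy : y ∈ unitI) (hz : 0 ≤ z) :
    x ≤ residuum f y z ↔ f x y ≤ z := by
  constructor
  · intro h
    have hm := res_mem hf hy hz
    exact le_trans (mono_left hf hx hm.1 hy h) hm.2
  · intro h
    exact le_csSup S_bdd ⟨hx, h⟩

lemma res_nonneg (hf : IsTNorm f) {y z : ℝ} (hy : y ∈ unitI) (hz : 0 ≤ z) :
    0 ≤ residuum f y z :=
  le_csSup S_bdd ⟨zero_mem, by rw [f_zero hf hy]; exact hz⟩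

lemma res_le_one (hf : IsTNorm f) {y z : ℝ} (hy : y ∈ unitI) (hz : 0 ≤ z) :
    residuum f y z ≤ 1 :=
  csSup_le (S_nonempty hf hy hz) (fun _ hx => hx.1.2)

lemma gcont (hf : IsTNorm f) {c : ℝ} (hc : c ∈ unitI) :
    ContinuousOn (fun p : ℝ × ℝ => f c p.1 - p.2) (unitI ×ˢ unitI) := by
  have h1 : ContinuousOn (fun p : ℝ × ℝ => f c p.1) (unitI ×ˢ unitI) :=
    hf.cont.comp ((continuous_const.prodMk continuous_fst).continuousOn)
      (fun p hp => ⟨hc, hp.1⟩)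
  exact h1.sub continuous_snd.continuousOn

lemma res_lt_iff (hf : IsTNorm f) {c : ℝ} (hc : c ∈ unitI) {p : ℝ × ℝ}
    (hp : p ∈ unitI ×ˢ unitI) :
    residuum f p.1 p.2 < c ↔ 0 < f c p.1 - p.2 := by
  rw [lt_iff_not_ge, adj hf hc hp.1 hp.2.1, not_le, ← sub_pos]

end TNormAux

open TNormAux in
theorem residuum_borel (f : ℝ → ℝ → ℝ) (hf : IsTNorm f) (a : ℝ) (ha0 : 0 < a) (ha1 : a < 1) :
    (∃ U : Set (ℝ × ℝ), IsOpen U ∧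
      {p : ℝ × ℝ | p ∈ unitI ×ˢ unitI ∧ residuum f p.1 p.2 < a} = U ∩ unitI ×ˢ unitI) ∧
    (∃ F : ℕ → Set (ℝ × ℝ), (∀ n, IsClosed (F n)) ∧
      {p : ℝ × ℝ | p ∈ unitI ×ˢ unitI ∧ a < residuum f p.1 p.2} = ⋃ n, F n) ∧
    Measurable ((unitI ×ˢ unitI).restrict (fun p : ℝ × ℝ => residuum f p.1 p.2)) := by
  have haI : a ∈ unitI := ⟨ha0.le, ha1.le⟩
  have hsq : IsClosed (unitI ×ˢ unitI : Set (ℝ × ℝ)) := isClosed_Icc.prod isClosed_Icc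
  refine ⟨?_, ?_, ?_⟩
  · -- open part
    obtain ⟨U, hU, hUeq⟩ := (continuousOn_iff'.mp (gcont hf haI)) (Set.Ioi 0) isOpen_Ioi
    refine ⟨U, hU, ?_⟩
    rw [← hUeq]
    ext p
    simp only [Set.mem_setOf_eq, Set.mem_inter_iff, Set.mem_preimage, Set.mem_Ioi]
    constructor
    · rintro ⟨hp, hlt⟩
      exact ⟨(res_lt_iff hf haI hp).mp hlt, hp⟩
    · rintro ⟨hlt, hp⟩
      exact ⟨hp, (res_lt_iff hf haI hp).mpr hlt⟩
  · -- Fσ part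
    set xseq : ℕ → ℝ := fun n => a + (1 - a) / (n + 1) with hxseq
    have hn1 : ∀ n : ℕ, (0:ℝ) < (n:ℝ) + 1 := fun n => by positivity
    have hxa : ∀ n, a < xseq n := fun n => by
      have : (0:ℝ) < (1 - a) / (n + 1) := div_pos (by linarith) (hn1 n)
      simp only [hxseq]; linarith
    have hxseqI : ∀ n, xseq n ∈ unitI := fun n => by
      refine ⟨le_of_lt (lt_trans ha0 (hxa n)), ?_⟩
      have : (1 - a) / ((n:ℝ) + 1) ≤ 1 - a :=
        div_le_self (by linarith) (by linarith [hn1 n, Nat.cast_nonneg (α := ℝ) n])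
      simp only [hxseq]; linarith
    refine ⟨fun n => unitI ×ˢ unitI ∩ (fun p : ℝ × ℝ => f (xseq n) p.1 - p.2) ⁻¹' Set.Iic 0,
      fun n => (gcont hf (hxseqI n)).preimage_isClosed_of_isClosed hsq isClosed_Iic, ?_⟩
    ext p
    simp only [Set.mem_setOf_eq, Set.mem_iUnion, Set.mem_inter_iff, Set.mem_preimage,
      Set.mem_Iic, sub_nonpos]
    constructor
    · rintro ⟨hp, hlt⟩
      obtain ⟨x, ⟨hxI, hxfy⟩, hax⟩ :=
        (lt_csSup_iff S_bdd (S_nonempty hf hp.1 hp.2.1)).mp hlt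
      obtain ⟨n, hn⟩ := exists_nat_one_div_lt
        (show (0:ℝ) < (x - a) / (1 - a) from div_pos (by linarith) (by linarith))
      rw [div_lt_div_iff₀ (hn1 n) (by linarith : (0:ℝ) < 1 - a)] at hn
      have hxn : xseq n ≤ x := by
        have : (1 - a) / ((n:ℝ) + 1) ≤ x - a := by
          rw [div_le_iff₀ (hn1 n)]; nlinarith
        simp only [hxseq]; linarith
      exact ⟨n, hp, le_trans (mono_left hf (hxseqI n) hxI hp.1 hxn) hxfy⟩
    · rintro ⟨n, hp, hle⟩
      exact ⟨hp, (lt_csSup_iff S_bdd (S_nonempty hf hp.1 hp.2.1)).mpr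
        ⟨xseq n, ⟨hxseqI n, hle⟩, hxa n⟩⟩
  · -- measurability
    apply measurable_of_Iio
    intro c
    rcases le_or_gt c 0 with hc0 | hc0
    · have : ((unitI ×ˢ unitI).restrict (fun p : ℝ × ℝ => residuum f p.1 p.2)) ⁻¹' Set.Iio c
          = ∅ := by
        ext p
        simp only [Set.mem_preimage, Set.restrict_apply, Set.mem_Iio,
          Set.mem_empty_iff_false, iff_false, not_lt]
        exact le_trans hc0 (res_nonneg hf p.2.1 p.2.2.1)
      rw [this]; exact MeasurableSet.empty
    · rcases le_or_gt c 1 with hc1 | hc1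
      · have hcu : c ∈ unitI := ⟨hc0.le, hc1⟩
        have hcont : Continuous (fun p : ↥(unitI ×ˢ unitI) =>
            f c (p : ℝ × ℝ).1 - (p : ℝ × ℝ).2) := (gcont hf hcu).restrict
        have : ((unitI ×ˢ unitI).restrict (fun p : ℝ × ℝ => residuum f p.1 p.2)) ⁻¹' Set.Iio c
            = (fun p : ↥(unitI ×ˢ unitI) => f c (p : ℝ × ℝ).1 - (p : ℝ × ℝ).2) ⁻¹' Set.Ioi 0 := by
          ext p
          simp only [Set.mem_preimage, Set.restrict_apply, Set.mem_Iio, Set.mem_Ioi]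
          exact res_lt_iff hf hcu p.2
        rw [this]
        exact hcont.measurable measurableSet_Ioi
      · have : ((unitI ×ˢ unitI).restrict (fun p : ℝ × ℝ => residuum f p.1 p.2)) ⁻¹' Set.Iio c
            = Set.univ := by
          ext p
          simp only [Set.mem_preimage, Set.restrict_apply, Set.mem_Iio, Set.mem_univ, iff_true]
          exact lt_of_le_of_lt (res_le_one hf p.2.1 p.2.2.1) hc1
        rw [this]; exact MeasurableSet.univ
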